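/- Let G be the coloured graph of the inductive construction (G_1 a single edge e_1 = v_{11}v_{12} of colour 1; each G_i obtained from G_{i−1} by adding a new vertex joined by two edges of colour i to two distinct old vertices; G = G_{n−1}). Then for every pair of vertices u, v of G with {u,v} ≠ {v_{11}, v_{12}}, there exist two edge-disjoint rainbow paths P_1, P_2 from u to v with |P_1| + |P_2| ≤ n. -/

import Mathlib

open scoped Classical

namespace RainbowPaper

/-- The inductively constructed coloured graph on `n + 2` vertices: vertex `0` and
`1` are `v₁₁` and `v₁₂`, joined by the edge of colour `1`; every vertex `i ≥ 2` is
joined to the two distinct earlier vertices `f i` and `g i` by two edges of colour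
`i`.  (Since each edge joins a vertex to a strictly smaller one, the colour of an
edge is the larger of its two endpoints.) -/
def constructionGraph (n : ℕ) (f g : Fin (n + 2) → Fin (n + 2)) :
    SimpleGraph (Fin (n + 2)) where
  Adj a b := a ≠ b ∧ (s(a, b) = s(0, 1) ∨
    ∃ i : Fin (n + 2), 2 ≤ i.val ∧ (s(a, b) = s(i, f i) ∨ s(a, b) = s(i, g i)))
  symm := ⟨by
    rintro a b ⟨h1, h2⟩
    refine ⟨h1.symm, ?_⟩
    rw [Sym2.eq_swap]
    exact h2⟩
  loopless := ⟨fun a h => h.1 rfl⟩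

/-- The hypotheses of the construction: each new vertex `i ≥ 2` is joined to two
distinct earlier vertices. -/
def ConstructionHyp (n : ℕ) (f g : Fin (n + 2) → Fin (n + 2)) : Prop :=
  ∀ i : Fin (n + 2), 2 ≤ i.val → f i < i ∧ g i < i ∧ f i ≠ g i

/-- The colour of an edge of the construction graph: the larger of its two
endpoints (with the initial edge `{0, 1}` getting colour `1`). -/
def edgeColour {n : ℕ} : Sym2 (Fin (n + 2)) → ℕ :=
  Sym2.lift ⟨fun a b => max a.val b.val, fun a b => by simp [max_comm]⟩

/-- A rainbow path: a path whose edges receive pairwise distinct colours. -/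
def IsRainbowPath {V : Type*} (G : SimpleGraph V) (col : Sym2 V → ℕ) {u v : V}
    (p : G.Walk u v) : Prop :=
  p.IsPath ∧ (p.edges.map col).Nodup

/-- Two walks are edge-disjoint if no edge lies on both. -/
def EdgeDisjoint {V : Type*} {G : SimpleGraph V} {u v u' v' : V}
    (p : G.Walk u v) (q : G.Walk u' v') : Prop :=
  ∀ e, e ∈ p.edges → e ∉ q.edges

section Aux

open SimpleGraph

variable {n : ℕ} {f g : Fin (n + 2) → Fin (n + 2)}

lemma vne {x y : Fin (n + 2)} (h : x ≠ y) : x.val ≠ y.val :=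
  fun hv => h (Fin.ext hv)

lemma colour_mk (a b : Fin (n + 2)) : edgeColour s(a, b) = max a.val b.val := rfl

lemma adj_step (hfg : ConstructionHyp n f g) {i a : Fin (n + 2)} (h2 : 2 ≤ i.val)
    (ha : a = f i ∨ a = g i) : (constructionGraph n f g).Adj i a := by
  have hlt : a < i := by
    rcases ha with h | h
    · rw [h]; exact (hfg i h2).1
    · rw [h]; exact (hfg i h2).2.1
  show i ≠ a ∧ _
  refine ⟨(ne_of_lt hlt).symm, Or.inr ⟨i, h2, ?_⟩⟩
  rcases ha with h | h
  · exact Or.inl (by rw [h])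
  · exact Or.inr (by rw [h])

lemma adj01 : (constructionGraph n f g).Adj 0 1 := by
  show (0 : Fin (n + 2)) ≠ 1 ∧ _
  refine ⟨Fin.ne_of_val_ne (by simp), Or.inl rfl⟩

lemma rainbow_single {x y : Fin (n + 2)} (h : (constructionGraph n f g).Adj x y) :
    IsRainbowPath _ edgeColour (SimpleGraph.Walk.cons h SimpleGraph.Walk.nil) := by
  constructor
  · rw [SimpleGraph.Walk.cons_isPath_iff]
    exact ⟨SimpleGraph.Walk.IsPath.nil, by simp [h.ne]⟩
  · simp

lemma colour_lt {x y : Fin (n + 2)} {R : (constructionGraph n f g).Walk x y} {t : ℕ}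
    (hsupp : ∀ w ∈ R.support, w.val < t) {e : Sym2 (Fin (n + 2))} (he : e ∈ R.edges) :
    edgeColour e < t := by
  induction e with
  | h a b =>
    have ha := R.fst_mem_support_of_mem_edges he
    have hb := R.snd_mem_support_of_mem_edges he
    simpa [colour_mk] using max_lt (hsupp a ha) (hsupp b hb)

lemma rainbow_cons {x c y : Fin (n + 2)} (h : (constructionGraph n f g).Adj x c)
    (R : (constructionGraph n f g).Walk c y)
    (hR : IsRainbowPath _ edgeColour R)
    (hlt : ∀ w ∈ R.support, w.val < x.val) :
    IsRainbowPath _ edgeColour (SimpleGraph.Walk.cons h R) := by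
  constructor
  · rw [SimpleGraph.Walk.cons_isPath_iff]
    exact ⟨hR.1, fun hx => lt_irrefl _ (hlt x hx)⟩
  · rw [SimpleGraph.Walk.edges_cons, List.map_cons, List.nodup_cons]
    refine ⟨?_, hR.2⟩
    intro hmem
    rcases List.mem_map.1 hmem with ⟨e, he, hce⟩
    have h1 : edgeColour e < x.val := colour_lt hlt he
    have h2 : edgeColour s(x, c) = x.val := by
      have := hlt c R.start_mem_support
      rw [colour_mk]; omega
    omega

lemma rainbow_reverse {x y : Fin (n + 2)} {R : (constructionGraph n f g).Walk x y}
    (hR : IsRainbowPath _ edgeColour R) : IsRainbowPath _ edgeColour R.reverse := by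
  refine ⟨hR.1.reverse, ?_⟩
  rw [SimpleGraph.Walk.edges_reverse, List.map_reverse, List.nodup_reverse]
  exact hR.2

lemma not_top_edge {u v x y : Fin (n + 2)} {R : (constructionGraph n f g).Walk x y}
    (hsupp : ∀ w ∈ R.support, w.val < u.val) : s(u, v) ∉ R.edges :=
  fun he => lt_irrefl _ (hsupp u (R.fst_mem_support_of_mem_edges he))

lemma length_sum {u v : Fin (n + 2)} (huv : u ≠ v)
    {P1 P2 : (constructionGraph n f g).Walk u v}
    (h1 : P1.IsPath) (h2 : P2.IsPath)
    (hshare : ∀ w, w ∈ P1.support → w ∈ P2.support → w = u ∨ w = v) :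
    P1.length + P2.length ≤ n + 2 := by
  classical
  have hc1 : P1.support.toFinset.card = P1.length + 1 := by
    rw [List.toFinset_card_of_nodup ((SimpleGraph.Walk.isPath_def _).1 h1),
      SimpleGraph.Walk.length_support]
  have hc2 : P2.support.toFinset.card = P2.length + 1 := by
    rw [List.toFinset_card_of_nodup ((SimpleGraph.Walk.isPath_def _).1 h2),
      SimpleGraph.Walk.length_support]
  have hsub : P1.support.toFinset ∩ P2.support.toFinset ⊆ {u, v} := by
    intro w hw
    simp only [Finset.mem_inter, List.mem_toFinset] at hw
    simp only [Finset.mem_insert, Finset.mem_singleton]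
    exact hshare w hw.1 hw.2
  have hint : (P1.support.toFinset ∩ P2.support.toFinset).card ≤ 2 := by
    refine le_trans (Finset.card_le_card hsub) ?_
    refine le_trans (Finset.card_insert_le _ _) ?_
    simp
  have huni : (P1.support.toFinset ∪ P2.support.toFinset).card ≤ n + 2 := by
    refine le_trans (Finset.card_le_univ _) ?_
    simp
  have := Finset.card_union_add_card_inter P1.support.toFinset P2.support.toFinset
  omega

lemma edge_disjoint_of {u v : Fin (n + 2)}
    {P1 P2 : (constructionGraph n f g).Walk u v}
    (hshare : ∀ w, w ∈ P1.support → w ∈ P2.support → w = u ∨ w = v)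
    (hmiss : s(u, v) ∉ P1.edges ∨ s(u, v) ∉ P2.edges) :
    EdgeDisjoint P1 P2 := by
  intro e he1 he2
  induction e with
  | h c d =>
    have hadj : (constructionGraph n f g).Adj c d :=
      (SimpleGraph.mem_edgeSet _).1 (P1.edges_subset_edgeSet he1)
    have hcd : c ≠ d := hadj.ne
    have hc := hshare c (P1.fst_mem_support_of_mem_edges he1)
      (P2.fst_mem_support_of_mem_edges he2)
    have hd := hshare d (P1.snd_mem_support_of_mem_edges he1)
      (P2.snd_mem_support_of_mem_edges he2)
    have heq : s(c, d) = s(u, v) := by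
      rcases hc with rfl | rfl <;> rcases hd with rfl | rfl
      · exact absurd rfl hcd
      · rfl
      · exact Sym2.eq_swap
      · exact absurd rfl hcd
    rcases hmiss with hm | hm
    · exact hm (heq ▸ he1)
    · exact hm (heq ▸ he2)



lemma desc (hfg : ConstructionHyp n f g) :
    ∀ K : ℕ, ∀ x y : Fin (n + 2), x.val ≤ K → y < x →
    ∃ p : (constructionGraph n f g).Walk x y,
      IsRainbowPath _ edgeColour p ∧ ∀ w ∈ p.support, w.val ≤ x.val := by
  intro K
  induction K with
  | zero =>
    intro x y hx hy
    exact absurd (Fin.lt_def.1 hy) (by omega)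
  | succ K IH =>
    intro x y hx hyx
    have hyxv := Fin.lt_def.1 hyx
    by_cases h2 : 2 ≤ x.val
    · obtain ⟨hfx, hgx, _⟩ := hfg x h2
      have hfxv := Fin.lt_def.1 hfx
      by_cases hcy : f x = y
      · refine ⟨SimpleGraph.Walk.cons (adj_step hfg h2 (Or.inl hcy.symm)) SimpleGraph.Walk.nil,
          rainbow_single _, ?_⟩
        intro w hw
        simp only [SimpleGraph.Walk.support_cons, SimpleGraph.Walk.support_nil,
          List.mem_cons, List.mem_singleton] at hw
        rcases hw with rfl | hw
        · exact le_rfl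
        · rcases hw with rfl | hw
          · omega
          · exact absurd hw List.not_mem_nil
      · rcases lt_or_gt_of_ne (fun h : f x = y => hcy h) with hlt | hgt
        · -- f x < y
          obtain ⟨q, hq, hqs⟩ := IH y (f x) (by omega) hlt
          refine ⟨SimpleGraph.Walk.cons (adj_step hfg h2 (Or.inl rfl)) q.reverse,
            rainbow_cons _ _ (rainbow_reverse hq) ?_, ?_⟩
          · intro w hw
            rw [SimpleGraph.Walk.support_reverse, List.mem_reverse] at hw
            have := hqs w hw; omega
          · intro w hw
            rw [SimpleGraph.Walk.support_cons, List.mem_cons] at hw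
            rcases hw with rfl | hw
            · exact le_rfl
            · rw [SimpleGraph.Walk.support_reverse, List.mem_reverse] at hw
              have := hqs w hw; omega
        · -- y < f x
          obtain ⟨q, hq, hqs⟩ := IH (f x) y (by omega) hgt
          refine ⟨SimpleGraph.Walk.cons (adj_step hfg h2 (Or.inl rfl)) q,
            rainbow_cons _ _ hq (fun w hw => by have := hqs w hw; omega), ?_⟩
          intro w hw
          rw [SimpleGraph.Walk.support_cons, List.mem_cons] at hw
          rcases hw with rfl | hw
          · exact le_rfl
          · have := hqs w hw; omega
    · have hx1 : x.val = 1 := by omega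
      have hy0 : y.val = 0 := by omega
      have hxx : x = 1 := Fin.ext (by simp [hx1])
      have hyy : y = 0 := Fin.ext (by simp [hy0])
      subst hxx; subst hyy
      refine ⟨SimpleGraph.Walk.cons adj01.symm SimpleGraph.Walk.nil, rainbow_single _, ?_⟩
      intro w hw
      simp only [SimpleGraph.Walk.support_cons, SimpleGraph.Walk.support_nil,
        List.mem_cons, List.mem_singleton] at hw
      rcases hw with rfl | hw
      · exact le_rfl
      · rcases hw with rfl | hw
        · simp
        · exact absurd hw List.not_mem_nil

lemma rpath (hfg : ConstructionHyp n f g) {x y : Fin (n + 2)} (hxy : x ≠ y) :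
    ∃ p : (constructionGraph n f g).Walk x y,
      IsRainbowPath _ edgeColour p ∧ ∀ w ∈ p.support, w.val ≤ max x.val y.val := by
  rcases lt_or_gt_of_ne hxy with h | h
  · obtain ⟨q, hq, hqs⟩ := desc hfg y.val y x le_rfl h
    refine ⟨q.reverse, rainbow_reverse hq, ?_⟩
    intro w hw
    rw [SimpleGraph.Walk.support_reverse, List.mem_reverse] at hw
    have := hqs w hw; omega
  · obtain ⟨q, hq, hqs⟩ := desc hfg x.val x y le_rfl h
    exact ⟨q, hq, fun w hw => le_trans (hqs w hw) (le_max_left _ _)⟩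



open SimpleGraph in
def Sstmt (n : ℕ) (f g : Fin (n + 2) → Fin (n + 2)) (k : ℕ) : Prop :=
  ∀ x a b : Fin (n + 2), x.val ≤ k → a.val ≤ k → b.val ≤ k →
    x ≠ a → x ≠ b → a ≠ b →
    ∃ (Q1 : (constructionGraph n f g).Walk x a) (Q2 : (constructionGraph n f g).Walk x b),
      IsRainbowPath _ edgeColour Q1 ∧ IsRainbowPath _ edgeColour Q2 ∧
      (∀ w, w ∈ Q1.support → w ∈ Q2.support → w = x) ∧
      (∀ w ∈ Q1.support, w.val ≤ k) ∧ (∀ w ∈ Q2.support, w.val ≤ k)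

open SimpleGraph in
def Lstmt (n : ℕ) (f g : Fin (n + 2) → Fin (n + 2)) (k : ℕ) : Prop :=
  ∀ p q a b : Fin (n + 2), p.val ≤ k → q.val ≤ k → a.val ≤ k → b.val ≤ k →
    p ≠ q → a ≠ b → p ≠ a → p ≠ b → q ≠ a → q ≠ b →
    ∃ a' b' : Fin (n + 2), ((a' = a ∧ b' = b) ∨ (a' = b ∧ b' = a)) ∧
    ∃ (R1 : (constructionGraph n f g).Walk p a') (R2 : (constructionGraph n f g).Walk q b'),
      IsRainbowPath _ edgeColour R1 ∧ IsRainbowPath _ edgeColour R2 ∧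
      (∀ w, w ∈ R1.support → w ∈ R2.support → False) ∧
      (∀ w ∈ R1.support, w.val ≤ k) ∧ (∀ w ∈ R2.support, w.val ≤ k)



open SimpleGraph in
lemma SL (hfg : ConstructionHyp n f g) : ∀ k : ℕ, Sstmt n f g k ∧ Lstmt n f g k := by
  intro k
  induction k using Nat.strong_induction_on with
  | _ k IH =>
    constructor
    · -- Sstmt
      intro x a b hx ha hb hxa hxb hab
      have hvxa := vne hxa
      have hvxb := vne hxb
      have hvab := vne hab
      by_cases hall : x.val < k ∧ a.val < k ∧ b.val < k
      · obtain ⟨Q1, Q2, h1, h2, hsh, hb1, hb2⟩ :=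
          (IH (k - 1) (by omega)).1 x a b (by omega) (by omega) (by omega) hxa hxb hab
        exact ⟨Q1, Q2, h1, h2, hsh, fun w hw => by have := hb1 w hw; omega,
          fun w hw => by have := hb2 w hw; omega⟩
      · have hsome : x.val = k ∨ a.val = k ∨ b.val = k := by omega
        -- helper for the case when the top vertex is a target
        have caseTop : ∀ a b : Fin (n + 2), x ≠ a → x ≠ b → a ≠ b →
            a.val = k → b.val < k → x.val < k →
            ∃ (Q1 : (constructionGraph n f g).Walk x a)
              (Q2 : (constructionGraph n f g).Walk x b),
              IsRainbowPath _ edgeColour Q1 ∧ IsRainbowPath _ edgeColour Q2 ∧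
              (∀ w, w ∈ Q1.support → w ∈ Q2.support → w = x) ∧
              (∀ w ∈ Q1.support, w.val ≤ k) ∧ (∀ w ∈ Q2.support, w.val ≤ k) := by
          intro a b hxa hxb hab hak hbk hxk
          have hvxb := vne hxb
          have h2a : 2 ≤ a.val := by omega
          obtain ⟨hfa, hga, hfga⟩ := hfg a h2a
          have hfav := Fin.lt_def.1 hfa
          have hgav := Fin.lt_def.1 hga
          by_cases hxin : x = f a ∨ x = g a
          · have hadj : (constructionGraph n f g).Adj x a := (adj_step hfg h2a hxin).symm
            obtain ⟨R, hR, hRb⟩ := rpath hfg hxb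
            refine ⟨Walk.cons hadj Walk.nil, R, rainbow_single _, hR, ?_, ?_, ?_⟩
            · intro w hw1 hw2
              simp only [Walk.support_cons, Walk.support_nil, List.mem_cons,
                List.mem_singleton, List.not_mem_nil, or_false] at hw1
              rcases hw1 with rfl | rfl
              · rfl
              · have := hRb w hw2; omega
            · intro w hw
              simp only [Walk.support_cons, Walk.support_nil, List.mem_cons,
                List.mem_singleton, List.not_mem_nil, or_false] at hw
              rcases hw with rfl | rfl <;> omega
            · intro w hw; have := hRb w hw; omega
          · push_neg at hxin
            obtain ⟨c, hcin, hcb⟩ : ∃ c, (c = f a ∨ c = g a) ∧ c ≠ b := by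
              by_cases hfb : f a = b
              · exact ⟨g a, Or.inr rfl, fun hh => hfga (hfb.trans hh.symm)⟩
              · exact ⟨f a, Or.inl rfl, hfb⟩
            have hcv : c.val < k := by rcases hcin with h | h <;> rw [h] <;> omega
            have hxc : x ≠ c := by
              rcases hcin with h | h <;> rw [h] <;> [exact hxin.1; exact hxin.2]
            obtain ⟨W1, W2, hW1, hW2, hWsh, hWb1, hWb2⟩ :=
              (IH (k - 1) (by omega)).1 x c b (by omega) (by omega) (by omega) hxc hxb hcb
            have hadjac : (constructionGraph n f g).Adj a c := adj_step hfg h2a hcin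
            have hrb : ∀ w ∈ W1.reverse.support, w.val < a.val := by
              intro w hw; rw [Walk.support_reverse, List.mem_reverse] at hw
              have := hWb1 w hw; omega
            have hQ1' := rainbow_cons hadjac W1.reverse (rainbow_reverse hW1) hrb
            refine ⟨(Walk.cons hadjac W1.reverse).reverse, W2,
              rainbow_reverse hQ1', hW2, ?_, ?_, ?_⟩
            · intro w hw1 hw2
              rw [Walk.support_reverse, List.mem_reverse, Walk.support_cons,
                List.mem_cons, Walk.support_reverse, List.mem_reverse] at hw1
              rcases hw1 with rfl | hw1
              · have := hWb2 w hw2; omega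
              · exact hWsh w hw1 hw2
            · intro w hw
              rw [Walk.support_reverse, List.mem_reverse, Walk.support_cons,
                List.mem_cons, Walk.support_reverse, List.mem_reverse] at hw
              rcases hw with rfl | hw
              · omega
              · have := hWb1 w hw; omega
            · intro w hw; have := hWb2 w hw; omega
        rcases hsome with hxk | hak | hbk
        · -- x is the top vertex
          have hak : a.val < k := by omega
          have hbk : b.val < k := by omega
          have h2x : 2 ≤ x.val := by omega
          obtain ⟨hfx, hgx, hfgx⟩ := hfg x h2x
          have hfxv := Fin.lt_def.1 hfx
          have hgxv := Fin.lt_def.1 hgx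
          have inout : ∀ a b : Fin (n + 2), a.val < k → b.val < k → x ≠ a → x ≠ b → a ≠ b →
              (a = f x ∨ a = g x) → b ≠ f x → b ≠ g x →
              ∃ (Q1 : (constructionGraph n f g).Walk x a)
                (Q2 : (constructionGraph n f g).Walk x b),
                IsRainbowPath _ edgeColour Q1 ∧ IsRainbowPath _ edgeColour Q2 ∧
                (∀ w, w ∈ Q1.support → w ∈ Q2.support → w = x) ∧
                (∀ w ∈ Q1.support, w.val ≤ k) ∧ (∀ w ∈ Q2.support, w.val ≤ k) := by
            intro a b hak hbk hxa hxb hab hain hbf hbg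
            obtain ⟨q', hq'in, hq'a⟩ : ∃ q', (q' = f x ∨ q' = g x) ∧ q' ≠ a := by
              rcases hain with h | h
              · exact ⟨g x, Or.inr rfl, fun hh => hfgx ((hh.trans h).symm)⟩
              · exact ⟨f x, Or.inl rfl, fun hh => hfgx (hh.trans h)⟩
            have hq'v : q'.val < k := by rcases hq'in with h | h <;> rw [h] <;> omega
            have hq'b : b ≠ q' := by
              rcases hq'in with h | h <;> rw [h] <;> [exact hbf; exact hbg]
            obtain ⟨W1, W2, hW1, hW2, hWsh, hWb1, hWb2⟩ :=
              (IH (k - 1) (by omega)).1 b q' a (by omega) (by omega) (by omega)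
                hq'b hab.symm hq'a
            have hadj1 : (constructionGraph n f g).Adj x a := adj_step hfg h2x hain
            have hadj2 : (constructionGraph n f g).Adj x q' := adj_step hfg h2x hq'in
            have hrevb : ∀ w ∈ W1.reverse.support, w.val < x.val := by
              intro w hw; rw [Walk.support_reverse, List.mem_reverse] at hw
              have := hWb1 w hw; omega
            refine ⟨Walk.cons hadj1 Walk.nil, Walk.cons hadj2 W1.reverse,
              rainbow_single _, rainbow_cons _ _ (rainbow_reverse hW1) hrevb, ?_, ?_, ?_⟩
            · intro w hw1 hw2
              simp only [Walk.support_cons, Walk.support_nil, List.mem_cons,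
                List.mem_singleton, List.not_mem_nil, or_false] at hw1
              rcases hw1 with rfl | rfl
              · rfl
              · rw [Walk.support_cons, List.mem_cons] at hw2
                rcases hw2 with h | h
                · exact h
                · rw [Walk.support_reverse, List.mem_reverse] at h
                  exact absurd (hWsh w h W2.end_mem_support) hab
            · intro w hw
              simp only [Walk.support_cons, Walk.support_nil, List.mem_cons,
                List.mem_singleton, List.not_mem_nil, or_false] at hw
              rcases hw with rfl | rfl <;> omega
            · intro w hw
              rw [Walk.support_cons, List.mem_cons] at hw
              rcases hw with rfl | hw
              · omega
              · rw [Walk.support_reverse, List.mem_reverse] at hw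
                have := hWb1 w hw; omega
          by_cases hain : a = f x ∨ a = g x
          · by_cases hbin : b = f x ∨ b = g x
            · -- both are neighbours of x
              have hadj1 : (constructionGraph n f g).Adj x a := adj_step hfg h2x hain
              have hadj2 : (constructionGraph n f g).Adj x b := adj_step hfg h2x hbin
              refine ⟨Walk.cons hadj1 Walk.nil, Walk.cons hadj2 Walk.nil,
                rainbow_single _, rainbow_single _, ?_, ?_, ?_⟩
              · intro w hw1 hw2
                simp only [Walk.support_cons, Walk.support_nil, List.mem_cons,
                  List.mem_singleton, List.not_mem_nil, or_false] at hw1 hw2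
                rcases hw1 with rfl | rfl
                · rfl
                · rcases hw2 with h | h
                  · exact h
                  · exact absurd h hab
              · intro w hw
                simp only [Walk.support_cons, Walk.support_nil, List.mem_cons,
                  List.mem_singleton, List.not_mem_nil, or_false] at hw
                rcases hw with rfl | rfl <;> omega
              · intro w hw
                simp only [Walk.support_cons, Walk.support_nil, List.mem_cons,
                  List.mem_singleton, List.not_mem_nil, or_false] at hw
                rcases hw with rfl | rfl <;> omega
            · push_neg at hbin
              exact inout a b hak hbk hxa hxb hab hain hbin.1 hbin.2
          · by_cases hbin : b = f x ∨ b = g x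
            · push_neg at hain
              obtain ⟨Q2, Q1, h2, h1, hsh, hb2, hb1⟩ :=
                inout b a hbk hak hxb hxa hab.symm hbin hain.1 hain.2
              exact ⟨Q1, Q2, h1, h2, fun w hw1 hw2 => hsh w hw2 hw1, hb1, hb2⟩
            · -- both are non-neighbours : use the linkage statement
              push_neg at hain
              push_neg at hbin
              obtain ⟨a', b', hpair, R1, R2, hR1, hR2, hdisj, hLb1, hLb2⟩ :=
                (IH (k - 1) (by omega)).2 (f x) (g x) a b (by omega) (by omega)
                  (by omega) (by omega) hfgx hab
                  (fun h => hain.1 h.symm) (fun h => hbin.1 h.symm)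
                  (fun h => hain.2 h.symm) (fun h => hbin.2 h.symm)
              have hadj1 : (constructionGraph n f g).Adj x (f x) :=
                adj_step hfg h2x (Or.inl rfl)
              have hadj2 : (constructionGraph n f g).Adj x (g x) :=
                adj_step hfg h2x (Or.inr rfl)
              have hQ1 := rainbow_cons hadj1 R1 hR1
                (fun w hw => by have := hLb1 w hw; omega)
              have hQ2 := rainbow_cons hadj2 R2 hR2
                (fun w hw => by have := hLb2 w hw; omega)
              have hshare : ∀ w, w ∈ (Walk.cons hadj1 R1).support →
                  w ∈ (Walk.cons hadj2 R2).support → w = x := by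
                intro w hw1 hw2
                rw [Walk.support_cons, List.mem_cons] at hw1 hw2
                rcases hw1 with rfl | hw1
                · rfl
                · rcases hw2 with rfl | hw2
                  · rfl
                  · exact absurd (hdisj w hw1 hw2) not_false
              have hsb1 : ∀ w ∈ (Walk.cons hadj1 R1).support, w.val ≤ k := by
                intro w hw; rw [Walk.support_cons, List.mem_cons] at hw
                rcases hw with rfl | hw
                · omega
                · have := hLb1 w hw; omega
              have hsb2 : ∀ w ∈ (Walk.cons hadj2 R2).support, w.val ≤ k := by
                intro w hw; rw [Walk.support_cons, List.mem_cons] at hw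
                rcases hw with rfl | hw
                · omega
                · have := hLb2 w hw; omega
              rcases hpair with ⟨rfl, rfl⟩ | ⟨rfl, rfl⟩
              · exact ⟨Walk.cons hadj1 R1, Walk.cons hadj2 R2, hQ1, hQ2, hshare, hsb1, hsb2⟩
              · exact ⟨Walk.cons hadj2 R2, Walk.cons hadj1 R1, hQ2, hQ1,
                  fun w hw1 hw2 => hshare w hw2 hw1, hsb2, hsb1⟩
        · -- a is the top vertex
          exact caseTop a b hxa hxb hab hak (by omega) (by omega)
        · -- b is the top vertex
          obtain ⟨Q2, Q1, h2, h1, hsh, hb2, hb1⟩ :=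
            caseTop b a hxb hxa hab.symm hbk (by omega) (by omega)
          exact ⟨Q1, Q2, h1, h2, fun w hw1 hw2 => hsh w hw2 hw1, hb1, hb2⟩
    · -- Lstmt
      intro p q a b hp hq ha hb hpq hab hpa hpb hqa hqb
      have hvpq := vne hpq
      have hvab := vne hab
      have hvpa := vne hpa
      have hvpb := vne hpb
      have hvqa := vne hqa
      have hvqb := vne hqb
      by_cases hall : p.val < k ∧ q.val < k ∧ a.val < k ∧ b.val < k
      · obtain ⟨a', b', hpair, R1, R2, h1, h2, hdisj, hb1, hb2⟩ :=
          (IH (k - 1) (by omega)).2 p q a b (by omega) (by omega) (by omega) (by omega)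
            hpq hab hpa hpb hqa hqb
        exact ⟨a', b', hpair, R1, R2, h1, h2, hdisj,
          fun w hw => by have := hb1 w hw; omega,
          fun w hw => by have := hb2 w hw; omega⟩
      · have corePmax : ∀ p q a b : Fin (n + 2),
            p.val = k → q.val < k → a.val < k → b.val < k →
            p ≠ q → a ≠ b → p ≠ a → p ≠ b → q ≠ a → q ≠ b →
            ∃ a' b' : Fin (n + 2), ((a' = a ∧ b' = b) ∨ (a' = b ∧ b' = a)) ∧
            ∃ (R1 : (constructionGraph n f g).Walk p a')
              (R2 : (constructionGraph n f g).Walk q b'),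
              IsRainbowPath _ edgeColour R1 ∧ IsRainbowPath _ edgeColour R2 ∧
              (∀ w, w ∈ R1.support → w ∈ R2.support → False) ∧
              (∀ w ∈ R1.support, w.val ≤ k) ∧ (∀ w ∈ R2.support, w.val ≤ k) := by
          intro p q a b hpk hqk hak hbk hpq hab hpa hpb hqa hqb
          have hvqa := vne hqa
          have hvqb := vne hqb
          have hvab := vne hab
          have h2p : 2 ≤ p.val := by omega
          obtain ⟨hfp, hgp, hfgp⟩ := hfg p h2p
          have hfpv := Fin.lt_def.1 hfp
          have hgpv := Fin.lt_def.1 hgp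
          obtain ⟨e, hein, heq⟩ : ∃ e, (e = f p ∨ e = g p) ∧ e ≠ q := by
            by_cases hc : f p = q
            · exact ⟨g p, Or.inr rfl, fun hh => hfgp (hc.trans hh.symm)⟩
            · exact ⟨f p, Or.inl rfl, hc⟩
          have hev : e.val < k := by rcases hein with h | h <;> rw [h] <;> omega
          have hadj : (constructionGraph n f g).Adj p e := adj_step hfg h2p hein
          by_cases hea : e = a
          · -- direct edge p-a ; path q → b avoiding a
            obtain ⟨W1, W2, hW1, hW2, hWsh, hWb1, hWb2⟩ :=
              (IH (k - 1) (by omega)).1 q b a (by omega) (by omega) (by omega)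
                hqb hqa hab.symm
            have hadj' : (constructionGraph n f g).Adj p a := hea ▸ hadj
            refine ⟨a, b, Or.inl ⟨rfl, rfl⟩, Walk.cons hadj' Walk.nil, W1,
              rainbow_single _, hW1, ?_, ?_, ?_⟩
            · intro w hw1 hw2
              simp only [Walk.support_cons, Walk.support_nil, List.mem_cons,
                List.mem_singleton, List.not_mem_nil, or_false] at hw1
              rcases hw1 with rfl | rfl
              · have := hWb1 w hw2; omega
              · exact hqa (hWsh w hw2 W2.end_mem_support).symm
            · intro w hw
              simp only [Walk.support_cons, Walk.support_nil, List.mem_cons,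
                List.mem_singleton, List.not_mem_nil, or_false] at hw
              rcases hw with rfl | rfl <;> omega
            · intro w hw; have := hWb1 w hw; omega
          · by_cases heb : e = b
            · -- direct edge p-b ; path q → a avoiding b
              obtain ⟨W1, W2, hW1, hW2, hWsh, hWb1, hWb2⟩ :=
                (IH (k - 1) (by omega)).1 q a b (by omega) (by omega) (by omega)
                  hqa hqb hab
              have hadj' : (constructionGraph n f g).Adj p b := heb ▸ hadj
              refine ⟨b, a, Or.inr ⟨rfl, rfl⟩, Walk.cons hadj' Walk.nil, W1,
                rainbow_single _, hW1, ?_, ?_, ?_⟩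
              · intro w hw1 hw2
                simp only [Walk.support_cons, Walk.support_nil, List.mem_cons,
                  List.mem_singleton, List.not_mem_nil, or_false] at hw1
                rcases hw1 with rfl | rfl
                · have := hWb1 w hw2; omega
                · exact hqb (hWsh w hw2 W2.end_mem_support).symm
              · intro w hw
                simp only [Walk.support_cons, Walk.support_nil, List.mem_cons,
                  List.mem_singleton, List.not_mem_nil, or_false] at hw
                rcases hw with rfl | rfl <;> omega
              · intro w hw; have := hWb1 w hw; omega
            · -- recurse on the linkage from e and q
              obtain ⟨a', b', hpair, R1, R2, hR1, hR2, hdisj, hLb1, hLb2⟩ :=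
                (IH (k - 1) (by omega)).2 e q a b (by omega) (by omega) (by omega)
                  (by omega) heq hab hea heb hqa hqb
              refine ⟨a', b', hpair, Walk.cons hadj R1, R2,
                rainbow_cons _ _ hR1 (fun w hw => by have := hLb1 w hw; omega),
                hR2, ?_, ?_, ?_⟩
              · intro w hw1 hw2
                rw [Walk.support_cons, List.mem_cons] at hw1
                rcases hw1 with rfl | hw1
                · have := hLb2 w hw2; omega
                · exact hdisj w hw1 hw2
              · intro w hw
                rw [Walk.support_cons, List.mem_cons] at hw
                rcases hw with rfl | hw
                · omega
                · have := hLb1 w hw; omega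
              · intro w hw; have := hLb2 w hw; omega
        have hsome : p.val = k ∨ q.val = k ∨ a.val = k ∨ b.val = k := by omega
        rcases hsome with hpk | hqk | hak | hbk
        · exact corePmax p q a b hpk (by omega) (by omega) (by omega)
            hpq hab hpa hpb hqa hqb
        · obtain ⟨a', b', hpair, R1, R2, h1, h2, hdisj, hb1, hb2⟩ :=
            corePmax q p a b hqk (by omega) (by omega) (by omega)
              hpq.symm hab hqa hqb hpa hpb
          refine ⟨b', a', ?_, R2, R1, h2, h1, fun w hw1 hw2 => hdisj w hw2 hw1, hb2, hb1⟩
          rcases hpair with ⟨h1', h2'⟩ | ⟨h1', h2'⟩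
          · exact Or.inr ⟨h2', h1'⟩
          · exact Or.inl ⟨h2', h1'⟩
        · obtain ⟨p', q', hpair, R1, R2, h1, h2, hdisj, hb1, hb2⟩ :=
            corePmax a b p q hak (by omega) (by omega) (by omega)
              hab hpq hpa.symm hqa.symm hpb.symm hqb.symm
          have hd : ∀ w, w ∈ R2.reverse.support → w ∈ R1.reverse.support → False := by
            intro w hw2 hw1
            rw [Walk.support_reverse, List.mem_reverse] at hw1 hw2
            exact hdisj w hw1 hw2
          rcases hpair with ⟨rfl, rfl⟩ | ⟨rfl, rfl⟩
          · refine ⟨a, b, Or.inl ⟨rfl, rfl⟩, R1.reverse, R2.reverse,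
              rainbow_reverse h1, rainbow_reverse h2, fun w hw1 hw2 => hd w hw2 hw1, ?_, ?_⟩
            · intro w hw; rw [Walk.support_reverse, List.mem_reverse] at hw
              exact hb1 w hw
            · intro w hw; rw [Walk.support_reverse, List.mem_reverse] at hw
              exact hb2 w hw
          · refine ⟨b, a, Or.inr ⟨rfl, rfl⟩, R2.reverse, R1.reverse,
              rainbow_reverse h2, rainbow_reverse h1, hd, ?_, ?_⟩
            · intro w hw; rw [Walk.support_reverse, List.mem_reverse] at hw
              exact hb2 w hw
            · intro w hw; rw [Walk.support_reverse, List.mem_reverse] at hw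
              exact hb1 w hw
        · obtain ⟨p', q', hpair, R1, R2, h1, h2, hdisj, hb1, hb2⟩ :=
            corePmax b a p q hbk (by omega) (by omega) (by omega)
              hab.symm hpq hpb.symm hqb.symm hpa.symm hqa.symm
          have hd : ∀ w, w ∈ R2.reverse.support → w ∈ R1.reverse.support → False := by
            intro w hw2 hw1
            rw [Walk.support_reverse, List.mem_reverse] at hw1 hw2
            exact hdisj w hw1 hw2
          rcases hpair with ⟨rfl, rfl⟩ | ⟨rfl, rfl⟩
          · refine ⟨b, a, Or.inr ⟨rfl, rfl⟩, R1.reverse, R2.reverse,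
              rainbow_reverse h1, rainbow_reverse h2, fun w hw1 hw2 => hd w hw2 hw1, ?_, ?_⟩
            · intro w hw; rw [Walk.support_reverse, List.mem_reverse] at hw
              exact hb1 w hw
            · intro w hw; rw [Walk.support_reverse, List.mem_reverse] at hw
              exact hb2 w hw
          · refine ⟨a, b, Or.inl ⟨rfl, rfl⟩, R2.reverse, R1.reverse,
              rainbow_reverse h2, rainbow_reverse h1, hd, ?_, ?_⟩
            · intro w hw; rw [Walk.support_reverse, List.mem_reverse] at hw
              exact hb2 w hw
            · intro w hw; rw [Walk.support_reverse, List.mem_reverse] at hw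
              exact hb1 w hw



open SimpleGraph in
lemma main_aux (hfg : ConstructionHyp n f g) (u v : Fin (n + 2)) (hvu : v.val < u.val)
    (hne : s(u, v) ≠ s((0 : Fin (n + 2)), (1 : Fin (n + 2)))) :
    ∃ (P₁ P₂ : (constructionGraph n f g).Walk u v),
      IsRainbowPath _ edgeColour P₁ ∧ IsRainbowPath _ edgeColour P₂ ∧
      EdgeDisjoint P₁ P₂ ∧ P₁.length + P₂.length ≤ n + 2 := by
  have huv : u ≠ v := fun h => by rw [h] at hvu; omega
  have h2u : 2 ≤ u.val := by
    by_contra h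
    push_neg at h
    have hu1 : u = 1 := Fin.ext (by simp; omega)
    have hv0 : v = 0 := Fin.ext (by rw [Fin.val_zero]; omega)
    exact hne (by rw [hu1, hv0]; exact Sym2.eq_swap)
  obtain ⟨hfu, hgu, hfgu⟩ := hfg u h2u
  have hfuv := Fin.lt_def.1 hfu
  have hguv := Fin.lt_def.1 hgu
  by_cases hvin : v = f u ∨ v = g u
  · obtain ⟨w, hwin, hwv⟩ : ∃ w, (w = f u ∨ w = g u) ∧ w ≠ v := by
      rcases hvin with h | h
      · exact ⟨g u, Or.inr rfl, fun hh => hfgu ((hh.trans h).symm)⟩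
      · exact ⟨f u, Or.inl rfl, fun hh => hfgu (hh.trans h)⟩
    have hwuv : w.val < u.val := by rcases hwin with h | h <;> rw [h] <;> omega
    have hadjv : (constructionGraph n f g).Adj u v := adj_step hfg h2u hvin
    have hadjw : (constructionGraph n f g).Adj u w := adj_step hfg h2u hwin
    obtain ⟨R, hR, hRb⟩ := rpath hfg hwv
    have hbound : ∀ x ∈ R.support, x.val < u.val := by
      intro x hx; have := hRb x hx; omega
    have hP2 := rainbow_cons hadjw R hR hbound
    have hshare : ∀ x, x ∈ (Walk.cons hadjv Walk.nil).support →
        x ∈ (Walk.cons hadjw R).support → x = u ∨ x = v := by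
      intro x hx1 _
      simp only [Walk.support_cons, Walk.support_nil, List.mem_cons,
        List.mem_singleton, List.not_mem_nil, or_false] at hx1
      exact hx1
    refine ⟨Walk.cons hadjv Walk.nil, Walk.cons hadjw R, rainbow_single _, hP2, ?_, ?_⟩
    · refine edge_disjoint_of hshare (Or.inr ?_)
      rw [Walk.edges_cons, List.mem_cons]
      rintro (hh | hh)
      · rw [Sym2.eq_iff] at hh
        rcases hh with ⟨-, h2⟩ | ⟨-, h2⟩
        · exact hwv h2.symm
        · exact huv h2.symm
      · exact not_top_edge hbound hh
    · exact length_sum huv (rainbow_single hadjv).1 hP2.1 hshare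
  · push_neg at hvin
    obtain ⟨Q1, Q2, hQ1, hQ2, hsh, hb1, hb2⟩ :=
      (SL hfg (u.val - 1)).1 v (f u) (g u) (by omega) (by omega) (by omega)
        hvin.1 hvin.2 hfgu
    have hadjp : (constructionGraph n f g).Adj u (f u) := adj_step hfg h2u (Or.inl rfl)
    have hadjq : (constructionGraph n f g).Adj u (g u) := adj_step hfg h2u (Or.inr rfl)
    have hbb1 : ∀ x ∈ Q1.reverse.support, x.val < u.val := by
      intro x hx; rw [Walk.support_reverse, List.mem_reverse] at hx
      have := hb1 x hx; omega
    have hbb2 : ∀ x ∈ Q2.reverse.support, x.val < u.val := by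
      intro x hx; rw [Walk.support_reverse, List.mem_reverse] at hx
      have := hb2 x hx; omega
    have hP1 := rainbow_cons hadjp Q1.reverse (rainbow_reverse hQ1) hbb1
    have hP2 := rainbow_cons hadjq Q2.reverse (rainbow_reverse hQ2) hbb2
    have hshare : ∀ x, x ∈ (Walk.cons hadjp Q1.reverse).support →
        x ∈ (Walk.cons hadjq Q2.reverse).support → x = u ∨ x = v := by
      intro x hx1 hx2
      rw [Walk.support_cons, List.mem_cons] at hx1 hx2
      rcases hx1 with rfl | hx1
      · exact Or.inl rfl
      · rcases hx2 with rfl | hx2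
        · exact Or.inl rfl
        · rw [Walk.support_reverse, List.mem_reverse] at hx1 hx2
          exact Or.inr (hsh x hx1 hx2)
    refine ⟨Walk.cons hadjp Q1.reverse, Walk.cons hadjq Q2.reverse, hP1, hP2, ?_, ?_⟩
    · refine edge_disjoint_of hshare (Or.inl ?_)
      rw [Walk.edges_cons, List.mem_cons]
      rintro (hh | hh)
      · rw [Sym2.eq_iff] at hh
        rcases hh with ⟨-, h2⟩ | ⟨-, h2⟩
        · exact hvin.1 h2
        · exact huv h2.symm
      · exact not_top_edge hbb1 hh
    · exact length_sum huv hP1.1 hP2.1 hshare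

end Aux

theorem two_disjoint_rainbow_paths_same_ends' (n : ℕ)
    (f g : Fin (n + 2) → Fin (n + 2)) (hfg : ConstructionHyp n f g)
    (u v : Fin (n + 2)) (huv : u ≠ v)
    (hne : s(u, v) ≠ s((0 : Fin (n + 2)), (1 : Fin (n + 2)))) :
    ∃ (P₁ P₂ : (constructionGraph n f g).Walk u v),
      IsRainbowPath _ edgeColour P₁ ∧ IsRainbowPath _ edgeColour P₂ ∧
      EdgeDisjoint P₁ P₂ ∧ P₁.length + P₂.length ≤ n + 2 := by
  rcases lt_or_gt_of_ne (vne huv) with h | h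
  · have hne' : s(v, u) ≠ s((0 : Fin (n + 2)), 1) := fun hh => hne (Sym2.eq_swap.trans hh)
    obtain ⟨P1, P2, h1, h2, hd, hl⟩ := main_aux hfg v u h hne'
    refine ⟨P1.reverse, P2.reverse, rainbow_reverse h1, rainbow_reverse h2, ?_, ?_⟩
    · intro e he1 he2
      rw [SimpleGraph.Walk.edges_reverse, List.mem_reverse] at he1 he2
      exact hd e he1 he2
    · rw [SimpleGraph.Walk.length_reverse, SimpleGraph.Walk.length_reverse]; exact hl
  · exact main_aux hfg u v h hne


/-- in the construction graph on `n + 2` vertices, any two distinct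
vertices `u, v` with `{u, v} ≠ {v₁₁, v₁₂}` are joined by two edge-disjoint rainbow
paths of total length at most `n + 2`. -/
theorem two_disjoint_rainbow_paths_same_ends (n : ℕ)
    (f g : Fin (n + 2) → Fin (n + 2)) (hfg : ConstructionHyp n f g)
    (u v : Fin (n + 2)) (huv : u ≠ v)
    (hne : s(u, v) ≠ s((0 : Fin (n + 2)), (1 : Fin (n + 2)))) :
    ∃ (P₁ P₂ : (constructionGraph n f g).Walk u v),
      IsRainbowPath _ edgeColour P₁ ∧ IsRainbowPath _ edgeColour P₂ ∧
      EdgeDisjoint P₁ P₂ ∧ P₁.length + P₂.length ≤ n + 2 := by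
  exact two_disjoint_rainbow_paths_same_ends' n f g hfg u v huv hne
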